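/- (Normal quantile asymptotic expansion.) Let Φ be the cumulative distribution function of the standard normal distribution on ℝ, let β > 0, and for each integer n ≥ 2 let x_β(n) be the unique real number with Φ(x_β(n)) = 1 − n^{−β}. Then x_β(n) = (2β log n)^{1/2} − (log log n^β + log 4π) / (2(2β log n)^{1/2}) + o((log n)^{−1/2}) as n → ∞; in particular x_β(n)/(2β log n)^{1/2} → 1. -/

import Mathlib

open MeasureTheory Filter Real

/-- The standard normal cumulative distribution function. -/
noncomputable def stdNormalCDF (x : ℝ) : ℝ :=
  ∫ u in Set.Iic x, (Real.sqrt (2 * Real.pi))⁻¹ * Real.exp (-u ^ 2 / 2)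

open Set


noncomputable def gpdf (u : ℝ) : ℝ := (Real.sqrt (2 * Real.pi))⁻¹ * Real.exp (-u ^ 2 / 2)

lemma gpdf_pos (u : ℝ) : 0 < gpdf u := by
  have h : (0:ℝ) < Real.sqrt (2 * Real.pi) := Real.sqrt_pos.2 (by positivity)
  exact mul_pos (inv_pos.2 h) (Real.exp_pos _)

lemma gpdf_eq (u : ℝ) : gpdf u = (Real.sqrt (2 * Real.pi))⁻¹ * Real.exp (-(1/2) * u ^ 2) := by
  unfold gpdf; ring_nf

lemma integrable_gpdf : Integrable gpdf := by
  have := integrable_exp_neg_mul_sq (b := 1/2) (by norm_num)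
  have h2 := this.const_mul (Real.sqrt (2 * Real.pi))⁻¹
  refine h2.congr ?_
  filter_upwards with u
  rw [gpdf_eq]

lemma integral_gpdf : ∫ u, gpdf u = 1 := by
  have h : ∫ u : ℝ, Real.exp (-(1/2) * u ^ 2) = Real.sqrt (π / (1/2)) := integral_gaussian (1/2)
  have : ∫ u, gpdf u = (Real.sqrt (2 * Real.pi))⁻¹ * ∫ u : ℝ, Real.exp (-(1/2) * u ^ 2) := by
    rw [← integral_const_mul]
    congr 1; ext u; rw [gpdf_eq]
  rw [this, h]
  have : π / (1/2) = 2 * π := by ring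
  rw [this, inv_mul_cancel₀ (ne_of_gt (Real.sqrt_pos.2 (by positivity)))]

lemma hasDerivAt_gpdf (u : ℝ) : HasDerivAt gpdf (-u * gpdf u) u := by
  have h1 : HasDerivAt (fun v : ℝ => -v ^ 2 / 2) (-u) u := by
    have := ((hasDerivAt_pow 2 u).neg).div_const 2
    simpa using this.congr_deriv (by ring)
  have h2 := (h1.exp).const_mul (Real.sqrt (2 * Real.pi))⁻¹
  unfold gpdf
  exact h2.congr_deriv (by ring)

noncomputable def ntail (x : ℝ) : ℝ := ∫ u in Set.Ioi x, gpdf u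

lemma log_gpdf (u : ℝ) : Real.log (gpdf u) = -u^2/2 - Real.log (Real.sqrt (2*Real.pi)) := by
  unfold gpdf
  rw [Real.log_mul (inv_ne_zero (Real.sqrt_pos.2 (by positivity)).ne') (Real.exp_pos _).ne',
    Real.log_inv, Real.log_exp]
  ring

lemma stdNormalCDF_eq (x : ℝ) : stdNormalCDF x = 1 - ntail x := by
  have h : stdNormalCDF x + ntail x = 1 := by
    rw [← integral_gpdf]
    exact intervalIntegral.integral_Iic_add_Ioi integrable_gpdf.integrableOn integrable_gpdf.integrableOn
  linarith

lemma ntail_pos (x : ℝ) : 0 < ntail x := by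
  rw [ntail, setIntegral_pos_iff_support_of_nonneg_ae]
  · have : Function.support gpdf = Set.univ := by
      ext u; simp [Function.mem_support, (gpdf_pos u).ne']
    rw [this]
    simp [Set.univ_inter]
  · filter_upwards with u using (gpdf_pos u).le
  · exact integrable_gpdf.integrableOn

lemma ntail_antitone : Antitone ntail := by
  intro a b hab
  exact setIntegral_mono_set integrable_gpdf.integrableOn
    (Filter.Eventually.of_forall fun u => (gpdf_pos u).le)
    (Filter.Eventually.of_forall fun u hu => lt_of_le_of_lt hab hu)

lemma integral_mul_gpdf (x : ℝ) (hx : 0 < x) : (IntegrableOn (fun u => u * gpdf u) (Set.Ioi x)) ∧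
    ∫ u in Set.Ioi x, u * gpdf u = gpdf x := by
  have hderiv : ∀ u ∈ Set.Ioi x, HasDerivAt (fun v => -gpdf v) (u * gpdf u) u := by
    intro u _
    exact (hasDerivAt_gpdf u).neg.congr_deriv (by ring)
  have hcont : ContinuousWithinAt (fun v => -gpdf v) (Set.Ici x) x :=
    ((hasDerivAt_gpdf x).neg.continuousAt).continuousWithinAt
  have htend : Tendsto (fun v => -gpdf v) atTop (nhds 0) := by
    have h1 : Tendsto (fun v : ℝ => -v ^ 2 / 2) atTop atBot := by
      apply Filter.Tendsto.atBot_div_const (by norm_num)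
      exact Filter.tendsto_neg_atBot_iff.mpr (tendsto_pow_atTop (by norm_num))
    have := (Real.tendsto_exp_atBot.comp h1).const_mul (Real.sqrt (2 * Real.pi))⁻¹
    simpa [gpdf] using this.neg
  have hpos : ∀ u ∈ Set.Ioi x, 0 ≤ u * gpdf u := fun u hu =>
    mul_nonneg (le_of_lt (lt_trans hx hu)) (gpdf_pos u).le
  refine ⟨MeasureTheory.integrableOn_Ioi_deriv_of_nonneg hcont hderiv hpos htend, ?_⟩
  have heq := MeasureTheory.integral_Ioi_of_hasDerivAt_of_nonneg hcont hderiv hpos htend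
  rw [heq]; ring


lemma ntail_le (x : ℝ) (hx : 0 < x) : ntail x ≤ gpdf x / x := by
  obtain ⟨hint, heq⟩ := integral_mul_gpdf x hx
  have hint2 : IntegrableOn (fun u => u / x * gpdf u) (Set.Ioi x) := by
    refine IntegrableOn.congr_fun (hint.const_mul x⁻¹) (fun u _ => ?_) measurableSet_Ioi
    ring
  have h1 : ntail x ≤ ∫ u in Set.Ioi x, u / x * gpdf u := by
    rw [ntail]
    refine setIntegral_mono_on integrable_gpdf.integrableOn hint2 measurableSet_Ioi ?_
    intro u hu
    exact le_mul_of_one_le_left (gpdf_pos u).le ((one_le_div hx).2 (le_of_lt hu))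
  have h2 : ∫ u in Set.Ioi x, u / x * gpdf u = gpdf x / x := by
    have : ∫ u in Set.Ioi x, u / x * gpdf u = x⁻¹ * ∫ u in Set.Ioi x, u * gpdf u := by
      rw [← integral_const_mul]
      refine setIntegral_congr_fun measurableSet_Ioi fun u _ => by ring
    rw [this, heq]; ring
  linarith

lemma le_ntail (x : ℝ) (hx : 2 ≤ x) : gpdf x / x * (1 - (x⁻¹)^2) ≤ ntail x := by
  have hx0 : 0 < x := by linarith
  set G : ℝ → ℝ := fun v => -(gpdf v * (v⁻¹ - (v⁻¹)^3)) with hG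
  have hderiv : ∀ u ∈ Set.Ioi x, HasDerivAt G (gpdf u * (1 - 3 * (u⁻¹)^4)) u := by
    intro u hu
    have hu0 : u ≠ 0 := by have : (2:ℝ) < u := lt_of_le_of_lt hx hu; linarith
    have h1 : HasDerivAt (fun v : ℝ => v⁻¹ - (v⁻¹)^3) (-(u⁻¹)^2 + 3 * (u⁻¹)^2 * (u⁻¹)^2) u := by
      have ha := hasDerivAt_inv hu0
      have hb : HasDerivAt (fun v : ℝ => (v⁻¹)^3) (3 * (u⁻¹)^2 * (-(u⁻¹)^2)) u := by
        have := (hasDerivAt_pow 3 (u⁻¹)).comp u ha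
        exact this.congr_deriv (by rw [show (3:ℕ) - 1 = 2 from rfl]; push_cast; ring)
      have := ha.sub hb
      exact this.congr_deriv (by ring)
    have h2 := ((hasDerivAt_gpdf u).mul h1).neg
    exact h2.congr_deriv (by field_simp; ring)
  have hcont : ContinuousWithinAt G (Set.Ici x) x := by
    have h1 : ContinuousAt gpdf x := (hasDerivAt_gpdf x).continuousAt
    have h2 : ContinuousAt (fun v : ℝ => v⁻¹) x := continuousAt_inv₀ hx0.ne'
    exact ((h1.mul (h2.sub (h2.pow 3))).neg).continuousWithinAt
  have htend : Tendsto G atTop (nhds 0) := by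
    have hg0 : Tendsto gpdf atTop (nhds 0) := by
      have h1 : Tendsto (fun v : ℝ => -v ^ 2 / 2) atTop atBot := by
        apply Filter.Tendsto.atBot_div_const (by norm_num)
        exact Filter.tendsto_neg_atBot_iff.mpr (tendsto_pow_atTop (by norm_num))
      have h2 := (Real.tendsto_exp_atBot.comp h1).const_mul (Real.sqrt (2 * Real.pi))⁻¹
      simp only [mul_zero] at h2
      exact h2.congr fun v => by simp [gpdf, Function.comp]
    have hi : Tendsto (fun v : ℝ => v⁻¹ - (v⁻¹)^3) atTop (nhds 0) := by
      have := tendsto_inv_atTop_zero (𝕜 := ℝ)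
      simpa using this.sub (this.pow 3)
    rw [hG]
    simpa using (hg0.mul hi).neg
  have hpos : ∀ u ∈ Set.Ioi x, 0 ≤ gpdf u * (1 - 3 * (u⁻¹)^4) := by
    intro u hu
    have hu2 : (2:ℝ) < u := lt_of_le_of_lt hx hu
    have : (u⁻¹)^4 ≤ (2⁻¹ : ℝ)^4 := by
      apply pow_le_pow_left₀ (by positivity)
      exact inv_anti₀ (by norm_num) hu2.le
    refine mul_nonneg (gpdf_pos u).le (by norm_num at this ⊢; linarith)
  have hint := MeasureTheory.integrableOn_Ioi_deriv_of_nonneg hcont hderiv hpos htend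
  have heq := MeasureTheory.integral_Ioi_of_hasDerivAt_of_nonneg hcont hderiv hpos htend
  have h1 : ∫ u in Set.Ioi x, gpdf u * (1 - 3 * (u⁻¹)^4) ≤ ntail x := by
    rw [ntail]
    refine setIntegral_mono_on hint integrable_gpdf.integrableOn measurableSet_Ioi ?_
    intro u hu
    nlinarith [gpdf_pos u, sq_nonneg ((u⁻¹)^2), (gpdf_pos u).le,
      mul_nonneg (gpdf_pos u).le (sq_nonneg ((u⁻¹)^2))]
  have h2 : gpdf x / x * (1 - (x⁻¹)^2) ≤ gpdf x * (x⁻¹ - (x⁻¹)^3) := by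
    have : gpdf x / x * (1 - (x⁻¹)^2) = gpdf x * (x⁻¹ - (x⁻¹)^3) := by
      field_simp
    linarith [this.le]
  rw [heq, hG] at h1
  simp only [zero_sub, neg_neg] at h1
  linarith

lemma alg (x s c : ℝ) (hs : 0 < s) (hxs : 0 < x + s) :
    (x - (s - c/(2*s))) * s =
      (x^2 - s^2 + c) * (s/(x+s)) +
        (c/s^2 * (x^2 - s^2 + c) - c^2/s^2) * (s^2/(2*(x+s)^2)) := by
  field_simp
  ring

lemma log_plus_div (K : ℝ) : Tendsto (fun z : ℝ => (Real.log z + K)/z) atTop (nhds 0) := by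
  have h1 : Tendsto (fun z : ℝ => Real.log z / z) atTop (nhds 0) := by
    have := Real.tendsto_pow_log_div_mul_add_atTop 1 0 1 one_ne_zero
    simpa using this
  have h2 : Tendsto (fun z : ℝ => K / z) atTop (nhds 0) :=
    tendsto_const_nhds.div_atTop tendsto_id
  have := h1.add h2
  simp only [add_zero] at this
  exact this.congr fun z => by rw [← add_div]

lemma log_plus_sq_div (K : ℝ) : Tendsto (fun z : ℝ => (Real.log z + K)^2/z) atTop (nhds 0) := by
  have h1 : Tendsto (fun z : ℝ => (Real.log z)^2 / z) atTop (nhds 0) := by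
    have := Real.tendsto_pow_log_div_mul_add_atTop 1 0 2 one_ne_zero
    simpa using this
  have h2 : Tendsto (fun z : ℝ => (2*K) * (Real.log z / z)) atTop (nhds 0) := by
    have := (Real.tendsto_pow_log_div_mul_add_atTop 1 0 1 one_ne_zero).const_mul (2*K)
    simpa using this
  have h3 : Tendsto (fun z : ℝ => K^2 / z) atTop (nhds 0) :=
    tendsto_const_nhds.div_atTop tendsto_id
  have h := (h1.add h2).add h3
  simp only [add_zero] at h
  apply h.congr' ?_
  filter_upwards [eventually_gt_atTop 0] with z hz
  field_simp
  ring

lemma log_shift_div (B : ℝ) : Tendsto (fun z : ℝ => Real.log (z + B)/z) atTop (nhds 0) := by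
  have h := (Real.tendsto_pow_log_div_mul_add_atTop 1 (-B) 1 one_ne_zero).comp
    (tendsto_atTop_add_const_right atTop B tendsto_id)
  apply h.congr
  intro z
  simp [Function.comp]

/-- normal quantile asymptotic expansion: if `Φ(x_β(n)) = 1 - n^{-β}`
then `x_β(n) = √(2β log n) − (log log n^β + log 4π)/(2√(2β log n)) + o((log n)^{-1/2})`,
and in particular `x_β(n)/√(2β log n) → 1`. -/
theorem normal_quantile_expansion
    (β : ℝ) (hβ : 0 < β) (xβ : ℕ → ℝ)
    (hxβ : ∀ n : ℕ, 2 ≤ n → stdNormalCDF (xβ n) = 1 - (n : ℝ) ^ (-β)) :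
    Tendsto
      (fun n : ℕ =>
        (xβ n -
          (Real.sqrt (2 * β * Real.log n) -
            (Real.log (Real.log ((n : ℝ) ^ β)) + Real.log (4 * Real.pi)) /
              (2 * Real.sqrt (2 * β * Real.log n)))) * Real.sqrt (Real.log n))
      atTop (nhds 0) ∧
    Tendsto (fun n : ℕ => xβ n / Real.sqrt (2 * β * Real.log n)) atTop (nhds 1) := by
  -- notation
  set L : ℕ → ℝ := fun n => 2 * β * Real.log n with hLdef
  set s : ℕ → ℝ := fun n => Real.sqrt (L n) with hsdef
  set c : ℕ → ℝ := fun n => Real.log (L n) + Real.log (2 * Real.pi) with hcdef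
  clear_value L s c
  -- tail identity
  have hT : ∀ᶠ n : ℕ in atTop, ntail (xβ n) = (n:ℝ)^(-β) := by
    filter_upwards [eventually_ge_atTop 2] with n hn
    have h := hxβ n hn
    rw [stdNormalCDF_eq] at h
    linarith
  have hT0 : Tendsto (fun n : ℕ => ((n:ℝ))^(-β)) atTop (nhds 0) :=
    (tendsto_rpow_neg_atTop hβ).comp tendsto_natCast_atTop_atTop
  -- xβ → ∞
  have hx_top : Tendsto xβ atTop atTop := by
    rw [tendsto_atTop]
    intro M
    have hev : ∀ᶠ n : ℕ in atTop, ntail (xβ n) < ntail M := by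
      filter_upwards [hT0.eventually_lt_const (ntail_pos M), hT] with n h1 h2
      rw [h2]; exact h1
    filter_upwards [hev] with n hn
    by_contra h
    push_neg at h
    exact absurd (ntail_antitone h.le) (not_le.2 hn)
  have hx2 : ∀ᶠ n : ℕ in atTop, 2 ≤ xβ n := hx_top.eventually_ge_atTop 2
  -- L → ∞
  have hL_top : Tendsto L atTop atTop := by
    rw [hLdef]
    apply Tendsto.const_mul_atTop (by positivity : (0:ℝ) < 2 * β)
    exact Real.tendsto_log_atTop.comp tendsto_natCast_atTop_atTop
  -- η → 0
  set η : ℕ → ℝ := fun n => Real.log (ntail (xβ n)) - Real.log (gpdf (xβ n) / xβ n) with hηdef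
  clear_value η
  have hη_up : ∀ᶠ n : ℕ in atTop, η n ≤ 0 := by
    filter_upwards [hx2] with n hn
    have hx0 : (0:ℝ) < xβ n := by linarith
    have := Real.log_le_log (ntail_pos (xβ n)) (ntail_le (xβ n) hx0)
    simp only [hηdef]; linarith
  have hη_lo : ∀ᶠ n : ℕ in atTop, Real.log (1 - ((xβ n)⁻¹)^2) ≤ η n := by
    filter_upwards [hx2] with n hn
    have hx0 : (0:ℝ) < xβ n := by linarith
    have hinv : (xβ n)⁻¹ ≤ 1/2 := by
      rw [inv_le_comm₀ hx0 (by norm_num)]; linarith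
    have hinv0 : 0 < (xβ n)⁻¹ := inv_pos.2 hx0
    have hfac : 0 < 1 - ((xβ n)⁻¹)^2 := by nlinarith
    have hgx : 0 < gpdf (xβ n) / xβ n := div_pos (gpdf_pos _) hx0
    have h1 := le_ntail (xβ n) hn
    have h2 := Real.log_le_log (mul_pos hgx hfac) h1
    rw [Real.log_mul hgx.ne' hfac.ne'] at h2
    simp only [hηdef]; linarith
  have hη0 : Tendsto η atTop (nhds 0) := by
    have hinv : Tendsto (fun n : ℕ => (xβ n)⁻¹) atTop (nhds 0) :=
      tendsto_inv_atTop_zero.comp hx_top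
    have h1 : Tendsto (fun n : ℕ => 1 - ((xβ n)⁻¹)^2) atTop (nhds 1) := by
      have := (hinv.pow 2).const_sub 1
      simpa using this
    have hlog1 : Tendsto (fun n : ℕ => Real.log (1 - ((xβ n)⁻¹)^2)) atTop (nhds 0) := by
      have := (Real.continuousAt_log one_ne_zero).tendsto.comp h1
      simpa [Function.comp_def] using this
    exact tendsto_of_tendsto_of_tendsto_of_le_of_le' hlog1 tendsto_const_nhds hη_lo hη_up
  -- key identity
  have hkey : ∀ᶠ n : ℕ in atTop,
      (xβ n)^2 = L n - 2 * Real.log (xβ n) - Real.log (2*Real.pi) + 2 * η n := by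
    filter_upwards [hT, hx2, eventually_ge_atTop 2] with n h1 h2 hn2
    have hn0 : (0:ℝ) < n := by
      have : (2:ℝ) ≤ n := by exact_mod_cast hn2
      linarith
    have hx0 : (0:ℝ) < xβ n := by linarith
    have hlogT : Real.log (ntail (xβ n)) = -β * Real.log n := by
      rw [h1, Real.log_rpow hn0]
    have hgl : Real.log (gpdf (xβ n) / xβ n)
        = -(xβ n)^2/2 - Real.log (Real.sqrt (2*Real.pi)) - Real.log (xβ n) := by
      rw [Real.log_div (gpdf_pos _).ne' hx0.ne', log_gpdf]
    have hsq : Real.log (Real.sqrt (2*Real.pi)) = Real.log (2*Real.pi) / 2 :=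
      Real.log_sqrt (by positivity)
    have hηn : η n = Real.log (ntail (xβ n)) - Real.log (gpdf (xβ n) / xβ n) := by rw [hηdef]
    rw [hlogT, hgl, hsq] at hηn
    have hLn : L n = 2 * β * Real.log n := by rw [hLdef]
    rw [hLn]
    linarith
  -- r := 2η → 0
  -- upper bound on y
  set B : ℝ := 1 + |Real.log (2*Real.pi)| with hBdef
  clear_value B
  have hB0 : 0 < B := by rw [hBdef]; positivity
  have h_up : ∀ᶠ n : ℕ in atTop, (xβ n)^2 ≤ L n + B := by
    filter_upwards [hkey, hx2, hη0.eventually (eventually_le_nhds (by norm_num : (0:ℝ) < 1/2))]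
      with n h1 h2 h3
    have hlx : 0 ≤ Real.log (xβ n) := Real.log_nonneg (by linarith)
    have := neg_abs_le (Real.log (2*Real.pi))
    simp only [hBdef]
    linarith
  -- t := y/L → 1
  have hL_pos : ∀ᶠ n : ℕ in atTop, 1 ≤ L n := hL_top.eventually_ge_atTop 1
  have hlo : Tendsto (fun n : ℕ => (L n - (Real.log (L n + B) + 2*B)) / L n) atTop (nhds 1) := by
    have h1 : Tendsto (fun n : ℕ => Real.log (L n + B) / L n) atTop (nhds 0) := by
      have := (log_shift_div B).comp hL_top
      exact this.congr fun n => rfl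
    have h2 : Tendsto (fun n : ℕ => (2*B) / L n) atTop (nhds 0) :=
      tendsto_const_nhds.div_atTop hL_top
    have h := (tendsto_const_nhds (x := (1:ℝ)).sub h1).sub h2
    simp only [sub_zero] at h
    apply h.congr' ?_
    filter_upwards [hL_pos] with n hn
    have hL0 : (0:ℝ) < L n := by linarith
    field_simp
    ring
  have hhi : Tendsto (fun n : ℕ => (L n + B) / L n) atTop (nhds 1) := by
    have h2 : Tendsto (fun n : ℕ => B / L n) atTop (nhds 0) :=
      tendsto_const_nhds.div_atTop hL_top
    have h := (tendsto_const_nhds (x := (1:ℝ))).add h2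
    simp only [add_zero] at h
    apply h.congr' ?_
    filter_upwards [hL_pos] with n hn
    have hL0 : (0:ℝ) < L n := by linarith
    field_simp
  have ht1 : Tendsto (fun n : ℕ => (xβ n)^2 / L n) atTop (nhds 1) := by
    have hlo_ev : ∀ᶠ n : ℕ in atTop,
        (L n - (Real.log (L n + B) + 2*B)) / L n ≤ (xβ n)^2 / L n := by
      filter_upwards [hkey, hx2, h_up, hL_pos,
        hη0.eventually (eventually_ge_nhds (by norm_num : (-(1/2):ℝ) < 0))]
        with n h1 h2 h3 h4 h6
      have hx0 : (0:ℝ) < xβ n := by linarith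
      have hL0 : (0:ℝ) < L n := by linarith
      rw [div_le_div_iff_of_pos_right hL0]
      have hy1 : (1:ℝ) ≤ (xβ n)^2 := by nlinarith
      have hlogy : 2 * Real.log (xβ n) = Real.log ((xβ n)^2) := by
        rw [Real.log_pow]; push_cast; ring
      have hmono : Real.log ((xβ n)^2) ≤ Real.log (L n + B) :=
        Real.log_le_log (by linarith) h3
      have habs : Real.log (2*Real.pi) ≤ |Real.log (2*Real.pi)| := le_abs_self _
      have hBval : |Real.log (2*Real.pi)| = B - 1 := by rw [hBdef]; ring
      linarith
    have hhi_ev : ∀ᶠ n : ℕ in atTop, (xβ n)^2 / L n ≤ (L n + B) / L n := by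
      filter_upwards [h_up, hL_pos] with n h3 h4
      have hL0 : (0:ℝ) < L n := by linarith
      rw [div_le_div_iff_of_pos_right hL0]
      exact h3
    exact tendsto_of_tendsto_of_tendsto_of_le_of_le' hlo hhi hlo_ev hhi_ev
  have hlogt : Tendsto (fun n : ℕ => Real.log ((xβ n)^2 / L n)) atTop (nhds 0) := by
    have := (Real.continuousAt_log one_ne_zero).tendsto.comp ht1
    simpa [Function.comp_def] using this
  have hs_pos : ∀ᶠ n : ℕ in atTop, 0 < s n := by
    filter_upwards [hL_pos] with n hn
    rw [hsdef]
    exact Real.sqrt_pos.2 (by linarith)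
  have hq : Tendsto (fun n : ℕ => xβ n / s n) atTop (nhds 1) := by
    have h := (Real.continuous_sqrt.tendsto 1).comp ht1
    simp only [Real.sqrt_one] at h
    apply h.congr' ?_
    filter_upwards [hx2, hL_pos] with n h2 h4
    have hx0 : (0:ℝ) < xβ n := by linarith
    simp only [Function.comp]
    rw [Real.sqrt_div (by positivity) (L n), Real.sqrt_sq hx0.le, hsdef]
  set δ : ℕ → ℝ := fun n => (xβ n)^2 - (s n)^2 + c n with hδdef
  clear_value δ
  have hδ0 : Tendsto δ atTop (nhds 0) := by
    have h := (hη0.const_mul 2).sub hlogt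
    simp only [mul_zero, sub_zero] at h
    apply h.congr' ?_
    filter_upwards [hkey, hx2, hL_pos] with n h1 h2 h4
    have hx0 : (0:ℝ) < xβ n := by linarith
    have hL0 : (0:ℝ) < L n := by linarith
    have hy0 : (0:ℝ) < (xβ n)^2 := by positivity
    have hlogy : 2 * Real.log (xβ n) = Real.log ((xβ n)^2) := by
      rw [Real.log_pow]; push_cast; ring
    have hsq : (s n)^2 = L n := by rw [hsdef]; exact Real.sq_sqrt (by linarith)
    have hcn : c n = Real.log (L n) + Real.log (2 * Real.pi) := by rw [hcdef]
    have hδn : δ n = (xβ n)^2 - (s n)^2 + c n := by rw [hδdef]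
    rw [hδn, hsq, hcn, Real.log_div hy0.ne' hL0.ne']
    linarith
  have hP2 : Tendsto (fun n : ℕ => c n / L n) atTop (nhds 0) := by
    have h := (log_plus_div (Real.log (2*Real.pi))).comp hL_top
    apply h.congr fun n => ?_
    simp only [Function.comp, hcdef]
  have hP1 : Tendsto (fun n : ℕ => (c n)^2 / L n) atTop (nhds 0) := by
    have h := (log_plus_sq_div (Real.log (2*Real.pi))).comp hL_top
    apply h.congr fun n => ?_
    simp only [Function.comp, hcdef]
  have hu : Tendsto (fun n : ℕ => s n / (xβ n + s n)) atTop (nhds (1/2)) := by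
    have h := ((hq.add_const 1).inv₀ (by norm_num : (1:ℝ) + 1 ≠ 0))
    have h2 : ((1:ℝ) + 1)⁻¹ = 1/2 := by norm_num
    rw [h2] at h
    apply h.congr' ?_
    filter_upwards [hx2, hs_pos] with n h2' hs0
    have hx0 : (0:ℝ) < xβ n := by linarith
    field_simp
  have hw : Tendsto (fun n : ℕ => L n / (2*(xβ n + s n)^2)) atTop (nhds (1/8)) := by
    have h := (hu.pow 2).div_const 2
    have h2 : ((1:ℝ)/2)^2/2 = 1/8 := by norm_num
    rw [h2] at h
    apply h.congr' ?_
    filter_upwards [hx2, hs_pos, hL_pos] with n h2' hs0 h4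
    have hx0 : (0:ℝ) < xβ n := by linarith
    have hsq : (s n)^2 = L n := by rw [hsdef]; exact Real.sq_sqrt (by linarith)
    rw [← hsq]
    field_simp
  have hconc2 : Tendsto (fun n : ℕ => xβ n / Real.sqrt (2 * β * Real.log n)) atTop (nhds 1) := by
    apply hq.congr fun n => ?_
    rw [hsdef, hLdef]
  refine ⟨?_, hconc2⟩
  have hF : Tendsto (fun n : ℕ =>
      (δ n * (s n / (xβ n + s n)) +
        (c n / L n * δ n - (c n)^2 / L n) * (L n / (2*(xβ n + s n)^2))) / Real.sqrt (2*β))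
      atTop (nhds 0) := by
    have h := ((hδ0.mul hu).add (((hP2.mul hδ0).sub hP1).mul hw)).div_const (Real.sqrt (2*β))
    simpa using h
  apply hF.congr' ?_
  filter_upwards [hx2, hL_pos, eventually_ge_atTop 2] with n h2 h4 hn2
  have hn0 : (0:ℝ) < n := by
    have : (2:ℝ) ≤ n := by exact_mod_cast hn2
    linarith
  have hx0 : (0:ℝ) < xβ n := by linarith
  have hL0 : (0:ℝ) < L n := by linarith
  have hs0 : 0 < s n := by rw [hsdef]; exact Real.sqrt_pos.2 hL0
  have hsq : (s n)^2 = L n := by rw [hsdef]; exact Real.sq_sqrt hL0.le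
  have hLn : L n = 2 * β * Real.log n := by rw [hLdef]
  have hsn : s n = Real.sqrt (2 * β * Real.log n) := by simp only [hsdef]; rw [hLn]
  have hlogn : (0:ℝ) < Real.log n := by
    nlinarith [hL0, hLn]
  have hcSt : Real.log (Real.log ((n:ℝ) ^ β)) + Real.log (4 * Real.pi) = c n := by
    have e1 : Real.log ((n:ℝ) ^ β) = β * Real.log n := Real.log_rpow hn0 β
    have e2 : β * Real.log n = L n / 2 := by rw [hLn]; ring
    have e3 : Real.log (L n / 2) = Real.log (L n) - Real.log 2 :=
      Real.log_div hL0.ne' (by norm_num)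
    have e4 : Real.log (4 * Real.pi) = Real.log 4 + Real.log Real.pi :=
      Real.log_mul (by norm_num) (by positivity)
    have e5 : Real.log 4 = 2 * Real.log 2 := by
      rw [show (4:ℝ) = 2^2 by norm_num, Real.log_pow]; push_cast; ring
    have e6 : c n = Real.log (L n) + (Real.log 2 + Real.log Real.pi) := by
      rw [hcdef, Real.log_mul (by norm_num) (by positivity)]
    rw [e1, e2, e3, e4, e5, e6]
    ring
  have hsplit : Real.sqrt (Real.log ↑n) = s n / Real.sqrt (2*β) := by
    rw [hsn, Real.sqrt_mul (by positivity : (0:ℝ) ≤ 2*β)]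
    rw [mul_comm, mul_div_assoc, div_self (by positivity : Real.sqrt (2*β) ≠ 0), mul_one]
  have halg := alg (xβ n) (s n) (c n) hs0 (by positivity)
  have hδn : δ n = (xβ n)^2 - (s n)^2 + c n := by rw [hδdef]
  rw [hcSt, hsplit, ← hsn]
  conv_rhs => rw [← mul_div_assoc, halg, ← hδn, hsq]
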